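/- If A_n := E[([R_n-1]^+)^γ] → 0 for some γ ∈ (0,1], then E[log R_n] ≤ (1/γ) log(A_n + 1), and in particular limsup_n 2^{-n} E[log R_n] ≤ 0, hence the free energy vanishes. -/

import Mathlib

open MeasureTheory Filter Topology

private lemma real_rpow_add_le {a b p : ℝ} (ha : 0 ≤ a) (hb : 0 ≤ b) (hp : 0 ≤ p)
    (hp1 : p ≤ 1) : (a + b) ^ p ≤ a ^ p + b ^ p := by
  have h := NNReal.rpow_add_le_add_rpow a.toNNReal b.toNNReal hp hp1
  have h2 := (NNReal.coe_le_coe).2 h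
  push_cast [NNReal.coe_rpow] at h2
  rwa [Real.coe_toNNReal _ ha, Real.coe_toNNReal _ hb] at h2

/-- Tangent-line bound: `log (1+x) ≤ log (1+a) + (x-a)/(1+a)` for `x, a ≥ 0`. -/
private lemma log_tangent {x a : ℝ} (hx : 0 ≤ x) (ha : 0 ≤ a) :
    Real.log (1 + x) ≤ Real.log (1 + a) + (x - a) / (1 + a) := by
  have h1a : (0:ℝ) < 1 + a := by linarith
  have h1x : (0:ℝ) < 1 + x := by linarith
  have h := Real.log_le_sub_one_of_pos (div_pos h1x h1a)
  rw [Real.log_div h1x.ne' h1a.ne'] at h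
  have heq : (1 + x) / (1 + a) - 1 = (x - a) / (1 + a) := by
    field_simp
    ring
  linarith [heq ▸ h]

private lemma key_pointwise {r a γ : ℝ} (hr : 0 ≤ r) (ha : 0 ≤ a) (hγ0 : 0 < γ)
    (hγ1 : γ ≤ 1) :
    Real.log r ≤ (1 / γ) * (Real.log (1 + a) + (max (r - 1) 0 ^ γ - a) / (1 + a)) := by
  have h1a : (0:ℝ) < 1 + a := by linarith
  have hinv : (0:ℝ) ≤ 1 / γ := by positivity
  rcases le_or_gt r 1 with h | h
  · have hm : max (r - 1) 0 = 0 := max_eq_right (by linarith)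
    rw [hm, Real.zero_rpow hγ0.ne']
    have hlog : Real.log r ≤ 0 := Real.log_nonpos hr h
    have hge : a / (1 + a) ≤ Real.log (1 + a) := by
      have h := Real.log_le_sub_one_of_pos (show (0:ℝ) < 1 / (1 + a) by positivity)
      rw [Real.log_div one_ne_zero h1a.ne', Real.log_one] at h
      have heq : 1 / (1 + a) - 1 = -(a / (1 + a)) := by field_simp; ring
      linarith [heq ▸ h]
    have hnn : 0 ≤ Real.log (1 + a) + (0 - a) / (1 + a) := by
      have heq : (0 - a) / (1 + a) = -(a / (1 + a)) := by ring
      rw [heq]; linarith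
    nlinarith
  · have hr0 : (0:ℝ) < r := lt_trans one_pos h
    have hm : max (r - 1) 0 = r - 1 := max_eq_left (by linarith)
    rw [hm]
    have hsub : r ^ γ ≤ 1 + (r - 1) ^ γ := by
      have h' := real_rpow_add_le (show (0:ℝ) ≤ 1 by norm_num)
        (show (0:ℝ) ≤ r - 1 by linarith) hγ0.le hγ1
      rwa [Real.one_rpow, show (1 : ℝ) + (r - 1) = r by ring] at h'
    have hrpow : (0:ℝ) < r ^ γ := Real.rpow_pos_of_pos hr0 γ
    have hlogr : Real.log r = (1 / γ) * Real.log (r ^ γ) := by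
      rw [Real.log_rpow hr0]; field_simp
    have h1 : Real.log (r ^ γ) ≤ Real.log (1 + (r - 1) ^ γ) :=
      Real.log_le_log hrpow hsub
    have h2 : Real.log (1 + (r - 1) ^ γ) ≤
        Real.log (1 + a) + ((r - 1) ^ γ - a) / (1 + a) :=
      log_tangent (Real.rpow_nonneg (by linarith) γ) ha
    calc Real.log r = (1 / γ) * Real.log (r ^ γ) := hlogr
      _ ≤ (1 / γ) * (Real.log (1 + a) + ((r - 1) ^ γ - a) / (1 + a)) :=
          mul_le_mul_of_nonneg_left (h1.trans h2) hinv

/-- If `A n := E[([R_n - 1]^+)^γ] → 0` for some `γ ∈ (0,1]`, then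
`E[log R_n] ≤ (1/γ) log (A n + 1)`; in particular `limsup 2^{-n} E[log R_n] ≤ 0`,
hence (using the lower bound `R n ≥ (B-1)/B`) the free energy vanishes. -/
theorem stmt8 {Ω : Type*} [MeasurableSpace Ω] (μ : Measure Ω) [IsProbabilityMeasure μ]
    (B γ : ℝ) (hB : 2 < B) (hγ : γ ∈ Set.Ioc (0 : ℝ) 1)
    (R : ℕ → Ω → ℝ) (hpos : ∀ n x, 0 ≤ R n x)
    (hlb : ∀ n, 1 ≤ n → ∀ x, (B - 1) / B ≤ R n x)
    (hintlog : ∀ n, Integrable (fun x => Real.log (R n x)) μ)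
    (hintA : ∀ n, Integrable (fun x => max (R n x - 1) 0 ^ γ) μ)
    (A : ℕ → ℝ) (hA : ∀ n, A n = ∫ x, max (R n x - 1) 0 ^ γ ∂μ)
    (hA0 : Tendsto A atTop (𝓝 0)) :
    (∀ n, ∫ x, Real.log (R n x) ∂μ ≤ (1 / γ) * Real.log (A n + 1)) ∧
    limsup (fun n => (∫ x, Real.log (R n x) ∂μ) / 2 ^ n) atTop ≤ 0 ∧
    Tendsto (fun n => (∫ x, Real.log (R n x) ∂μ) / 2 ^ n) atTop (𝓝 0) := by
  obtain ⟨hγ0, hγ1⟩ := hγ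
  have hAnn : ∀ n, 0 ≤ A n := by
    intro n
    rw [hA n]
    exact integral_nonneg fun x => Real.rpow_nonneg (le_max_right _ _) γ
  have main : ∀ n, ∫ x, Real.log (R n x) ∂μ ≤ (1 / γ) * Real.log (A n + 1) := by
    intro n
    have hsub : Integrable (fun x => (max (R n x - 1) 0 ^ γ - A n) / (1 + A n)) μ := by
      exact ((hintA n).sub (integrable_const _)).div_const _
    have hint2 : Integrable
        (fun x => (1 / γ) * (Real.log (1 + A n) + (max (R n x - 1) 0 ^ γ - A n) / (1 + A n)))
        μ := ((integrable_const _).add hsub).const_mul _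
    have hle : ∫ x, Real.log (R n x) ∂μ ≤
        ∫ x, (1 / γ) * (Real.log (1 + A n) + (max (R n x - 1) 0 ^ γ - A n) / (1 + A n)) ∂μ := by
      refine integral_mono (hintlog n) hint2 fun x => ?_
      exact key_pointwise (hpos n x) (hAnn n) hγ0 hγ1
    have hcalc : ∫ x, (1 / γ) * (Real.log (1 + A n) +
        (max (R n x - 1) 0 ^ γ - A n) / (1 + A n)) ∂μ = (1 / γ) * Real.log (A n + 1) := by
      rw [integral_const_mul, integral_add (integrable_const _) hsub, integral_const]
      have : ∫ x, (max (R n x - 1) 0 ^ γ - A n) / (1 + A n) ∂μ = 0 := by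
        rw [integral_div, integral_sub (hintA n) (integrable_const _), integral_const]
        simp only [measure_univ, probReal_univ, ENNReal.toReal_one, one_smul, smul_eq_mul, one_mul]
        rw [← hA n, sub_self, zero_div]
      rw [this]
      simp only [measure_univ, probReal_univ, ENNReal.toReal_one, one_smul, smul_eq_mul, one_mul, add_zero]
      rw [add_comm (1:ℝ) (A n)]
    linarith [hcalc ▸ hle]
  refine ⟨main, ?_⟩
  have htend : Tendsto (fun n => (∫ x, Real.log (R n x) ∂μ) / 2 ^ n) atTop (𝓝 0) := by
    have hB0 : (0:ℝ) < B := by linarith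
    have hc : (0:ℝ) < (B - 1) / B := div_pos (by linarith) hB0
    set c := Real.log ((B - 1) / B) with hc_def
    have hlower : ∀ n, 1 ≤ n → c ≤ ∫ x, Real.log (R n x) ∂μ := by
      intro n hn
      have h' : ∫ _x, c ∂μ ≤ ∫ x, Real.log (R n x) ∂μ := by
        refine integral_mono (integrable_const _) (hintlog n) fun x => ?_
        exact Real.log_le_log hc (hlb n hn x)
      simpa using h'
    have hup : Tendsto (fun n => (1 / γ) * Real.log (A n + 1) * (1 / 2 : ℝ) ^ n) atTop (𝓝 0) := by
      have hA1 : Tendsto (fun n => A n + 1) atTop (𝓝 1) := by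
        simpa using hA0.add (tendsto_const_nhds : Tendsto (fun _ : ℕ => (1:ℝ)) atTop (𝓝 1))
      have h1 : Tendsto (fun n => Real.log (A n + 1)) atTop (𝓝 0) := by
        have := (Real.continuousAt_log (by norm_num : (1:ℝ) ≠ 0)).tendsto.comp hA1
        simpa [Function.comp_def] using this
      simpa using (h1.const_mul (1 / γ)).mul
        (tendsto_pow_atTop_nhds_zero_of_lt_one (by norm_num) (by norm_num) :
          Tendsto (fun n : ℕ => (1 / 2 : ℝ) ^ n) atTop (𝓝 0))
    have hlo : Tendsto (fun n => c * (1 / 2 : ℝ) ^ n) atTop (𝓝 0) := by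
      simpa using (tendsto_pow_atTop_nhds_zero_of_lt_one (show (0:ℝ) ≤ 1/2 by norm_num)
        (by norm_num)).const_mul c
    have hhalf : ∀ n : ℕ, (1/2:ℝ) ^ n * 2 ^ n = 1 := by
      intro n; rw [← mul_pow]; norm_num
    refine tendsto_of_tendsto_of_tendsto_of_le_of_le' hlo hup ?_ ?_
    · filter_upwards [eventually_ge_atTop 1] with n hn
      have h2 : (0:ℝ) < 2 ^ n := by positivity
      rw [le_div_iff₀ h2, mul_assoc, hhalf n, mul_one]
      exact hlower n hn
    · filter_upwards with n
      have h2 : (0:ℝ) < 2 ^ n := by positivity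
      rw [div_le_iff₀ h2, mul_assoc, hhalf n, mul_one]
      exact main n
  exact ⟨htend.limsup_eq.le, htend⟩
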